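/- Let Z be a Poisson random variable with parameter λ > 0, i.e. a random variable with values in ℕ whose law is the Poisson distribution with mean λ. Then for every real x with x ≥ e²·λ (where e is Euler's number), P(Z ≥ x) ≤ exp( −(x/2) · log(x/λ) ). -/

import Mathlib

open MeasureTheory ProbabilityTheory

/-- Poisson concentration, Lemma 1.2 of Penrose: if `Z` is a
Poisson random variable with parameter `λ > 0`, then for every `x ≥ e² λ`,
`P(Z ≥ x) ≤ exp(−(x/2) log(x/λ))`. -/
theorem poisson_concentration
    {Ω : Type*} [MeasurableSpace Ω] (P : Measure Ω) [IsProbabilityMeasure P]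
    (lam : NNReal) (hlam : 0 < lam)
    (Z : Ω → ℕ) (hZ : Measurable Z)
    (hlaw : P.map Z = poissonMeasure lam) :
    ∀ x : ℝ, Real.exp 2 * lam ≤ x →
      P {ω | x ≤ (Z ω : ℝ)}
        ≤ ENNReal.ofReal (Real.exp (-(x / 2) * Real.log (x / lam))) := by
  intro x hx
  have hlam' : (0:ℝ) < (lam:ℝ) := hlam
  have hxpos : (0:ℝ) < x := lt_of_lt_of_le (by positivity) hx
  set m : ℕ := ⌈x⌉₊ with hmdef
  have hxm : x ≤ (m:ℝ) := Nat.le_ceil x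
  have hmpos : 0 < m := Nat.ceil_pos.mpr hxpos
  have hmpos' : (0:ℝ) < (m:ℝ) := by exact_mod_cast hmpos
  have hfpos : (0:ℝ) < (Nat.factorial m : ℝ) := by positivity
  set S : Set ℕ := {n : ℕ | x ≤ (n:ℝ)} with hS
  have hmeas : MeasurableSet S := trivial
  have hmem : ∀ n : ℕ, n ∈ S ↔ m ≤ n := fun n => by
    simp only [hS, Set.mem_setOf_eq, hmdef, Nat.ceil_le]
  -- step 1: measure as tsum
  have key : P {ω | x ≤ (Z ω : ℝ)} = ∑' n : ℕ, S.indicator (fun n => poissonPMF lam n) n := by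
    have h1 : P {ω | x ≤ (Z ω : ℝ)} = (P.map Z) S := by
      rw [Measure.map_apply hZ hmeas]; rfl
    rw [h1, hlaw, show poissonMeasure lam = (poissonPMF lam).toMeasure from
      Measure.ext_iff_singleton.mpr (fun n => by
        rw [poissonMeasure_singleton, PMF.toMeasure_apply_singleton _ _ (measurableSet_singleton n)]
        rfl), PMF.toMeasure_apply _ hmeas]
  set C : ENNReal := ENNReal.ofReal ((lam:ℝ)^m / (Nat.factorial m)) with hC
  -- pointwise bound
  have hpt : ∀ k : ℕ, poissonPMF lam (k + m) ≤ C * poissonPMF lam k := by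
    intro k
    have hfac : ((Nat.factorial m : ℝ)) * (Nat.factorial k) ≤ (Nat.factorial (k + m)) := by
      have h2 : Nat.factorial m * Nat.factorial k ≤ Nat.factorial (k + m) := by
        rw [mul_comm]
        exact Nat.le_of_dvd (Nat.factorial_pos _) (Nat.factorial_mul_factorial_dvd_factorial_add k m)
      exact_mod_cast h2
    have hreal : poissonPMFReal lam (k + m) ≤
        ((lam:ℝ)^m / (Nat.factorial m)) * poissonPMFReal lam k := by
      rw [poissonPMFReal, poissonPMFReal]
      have hE : ((lam:ℝ)^m / (Nat.factorial m)) *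
            (Real.exp (-(lam:ℝ)) * (lam:ℝ)^k / (Nat.factorial k))
          = Real.exp (-(lam:ℝ)) * (lam:ℝ)^(k+m) /
            ((Nat.factorial m : ℝ) * (Nat.factorial k)) := by
        rw [pow_add]; ring
      rw [hE]
      gcongr
    calc poissonPMF lam (k + m) = ENNReal.ofReal (poissonPMFReal lam (k + m)) := rfl
      _ ≤ ENNReal.ofReal (((lam:ℝ)^m / (Nat.factorial m)) * poissonPMFReal lam k) :=
          ENNReal.ofReal_le_ofReal hreal
      _ = C * poissonPMF lam k := by
          rw [ENNReal.ofReal_mul (by positivity)]; rfl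
  -- reindex and bound
  have hsurj : Function.Surjective (fun k : ℕ => (⟨k + m, by
      rw [hmem]; exact Nat.le_add_left m k⟩ : S)) := by
    rintro ⟨n, hn⟩
    have hmn : m ≤ n := (hmem n).mp hn
    refine ⟨n - m, ?_⟩
    simp only [Subtype.mk.injEq]
    omega
  have step2 : (∑' n : ℕ, S.indicator (fun n => poissonPMF lam n) n) ≤ C := by
    calc (∑' n : ℕ, S.indicator (fun n => poissonPMF lam n) n)
        = ∑' n : S, poissonPMF lam n := (tsum_subtype S _).symm
      _ ≤ ∑' k : ℕ, poissonPMF lam (k + m) :=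
          ENNReal.tsum_le_tsum_comp_of_surjective hsurj (fun n : S => poissonPMF lam n)
      _ ≤ ∑' k : ℕ, C * poissonPMF lam k := ENNReal.tsum_le_tsum hpt
      _ = C * ∑' k : ℕ, poissonPMF lam k := ENNReal.tsum_mul_left
      _ = C := by rw [(poissonPMF lam).tsum_coe, mul_one]
  -- final real inequality
  have hfinal : (lam:ℝ)^m / (Nat.factorial m) ≤ Real.exp (-(x / 2) * Real.log (x / lam)) := by
    set L : ℝ := Real.log (x / (lam:ℝ)) with hL
    have hdivpos : 0 < x / (lam:ℝ) := by positivity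
    have hL2 : 2 ≤ L := by
      rw [hL, Real.le_log_iff_exp_le hdivpos, le_div_iff₀ hlam']
      exact hx
    have hLm : L ≤ Real.log ((m:ℝ) / (lam:ℝ)) := by
      apply Real.log_le_log hdivpos
      gcongr
    -- Stirling-type bound : m^m / m! ≤ exp m
    have hstir : ((m:ℝ))^m / (Nat.factorial m) ≤ Real.exp m := by
      have h1 : ((m:ℝ))^m / (Nat.factorial m) ≤
          ∑ i ∈ Finset.range (m+1), (m:ℝ)^i / (Nat.factorial i) :=
        Finset.single_le_sum (f := fun i => (m:ℝ)^i / (Nat.factorial i))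
          (fun i _ => by positivity) (Finset.self_mem_range_succ m)
      exact h1.trans (Real.sum_le_exp_of_nonneg (by positivity) (m+1))
    have hb : (0:ℝ) < (lam:ℝ) * Real.exp 1 / (m:ℝ) := by positivity
    have h3 : ((lam:ℝ) * Real.exp 1 / (m:ℝ))^m = (lam:ℝ)^m * (Real.exp m / (m:ℝ)^m) := by
      rw [div_pow, mul_pow, ← Real.exp_nat_mul, mul_one]
      ring
    have h4 : (1:ℝ)/(Nat.factorial m) ≤ Real.exp m / (m:ℝ)^m := by
      rw [div_le_div_iff₀ hfpos (by positivity)]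
      have h5 := (div_le_iff₀ hfpos).mp hstir
      nlinarith [h5]
    have h2 : (lam:ℝ)^m / (Nat.factorial m) ≤
        Real.exp ((m:ℝ) * Real.log ((lam:ℝ) * Real.exp 1 / (m:ℝ))) := by
      rw [Real.exp_nat_mul, Real.exp_log hb]
      calc (lam:ℝ)^m / (Nat.factorial m) = (lam:ℝ)^m * ((1:ℝ)/(Nat.factorial m)) := by ring
        _ ≤ (lam:ℝ)^m * (Real.exp m / (m:ℝ)^m) :=
            mul_le_mul_of_nonneg_left h4 (by positivity)
        _ = ((lam:ℝ) * Real.exp 1 / (m:ℝ))^m := h3.symm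
    have hlog : Real.log ((lam:ℝ) * Real.exp 1 / (m:ℝ))
        = 1 - Real.log ((m:ℝ)/(lam:ℝ)) := by
      rw [Real.log_div (by positivity) (by positivity),
        Real.log_mul (ne_of_gt hlam') (Real.exp_ne_zero 1), Real.log_exp,
        Real.log_div (by positivity) (ne_of_gt hlam')]
      ring
    have h6 : (m:ℝ) * Real.log ((lam:ℝ) * Real.exp 1 / (m:ℝ)) ≤ -(x/2) * L := by
      rw [hlog]
      set Lm : ℝ := Real.log ((m:ℝ)/(lam:ℝ))
      nlinarith [mul_nonneg hmpos'.le (sub_nonneg.mpr hLm),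
        mul_nonneg hmpos'.le (by linarith : (0:ℝ) ≤ L - 2),
        mul_nonneg (by linarith : (0:ℝ) ≤ (m:ℝ) - x) (by linarith : (0:ℝ) ≤ L)]
    exact h2.trans (Real.exp_le_exp.mpr h6)
  calc P {ω | x ≤ (Z ω : ℝ)} ≤ C := by rw [key]; exact step2
    _ ≤ ENNReal.ofReal (Real.exp (-(x / 2) * Real.log (x / lam))) :=
      ENNReal.ofReal_le_ofReal hfinal
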